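/- Let S = k[x_1,x_2,x_3], let d = (d_1,d_2,d_3) with 1 ≤ d_1 ≤ d_2 ≤ d_3 and 1 ≤ D ≤ d_1+d_2+d_3-3, and let c = (c_1,c_2,c_3) be defined as follows: with a minimal such that D ≤ Σ_{i=1}^a (d_i-1), set c_i = 1 for i < a, c_a = d_a - (D - Σ_{i=1}^{a-1}(d_i-1)), and c_i = d_i for i > a. Let L(d;D) = (x_1^{d_1},x_2^{d_2},x_3^{d_3}, U_D) where U_D is the lexicographically largest degree-D monomial not in (x_1^{d_1},x_2^{d_2},x_3^{d_3}). Then the k-vector space dimension of S/L(d;D) equals d_1 d_2 d_3 - c_1 c_2 c_3. -/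

import Mathlib

open MvPolynomial Finsupp

variable {k : Type} [Field k]

/-- Hilbert function of `S/I` in degree `m`, where `S = k[x_1,...,x_n]`. -/
noncomputable def HF {n : ℕ} (I : Ideal (MvPolynomial (Fin n) k)) (m : ℕ) : ℕ :=
  Module.finrank k
    ((homogeneousSubmodule (Fin n) k m).map (Ideal.Quotient.mkₐ k I).toLinearMap)

/-- The ideal `(x_1^{d_1},...,x_h^{d_h})` inside `k[x_1,...,x_n]`. -/
noncomputable def pows {n h : ℕ} (hh : h ≤ n) (d : Fin h → ℕ) :
    Ideal (MvPolynomial (Fin n) k) :=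
  Ideal.span (Set.range fun i : Fin h => (X (Fin.castLE hh i) : MvPolynomial (Fin n) k) ^ d i)

/-- `u` is the exponent vector of the lexicographically largest monomial of degree `D`
not belonging to the ideal `I` (convention `x_1 > x_2 > ... > x_n`). -/
def IsLexLargestNonmember {n : ℕ} (I : Ideal (MvPolynomial (Fin n) k)) (D : ℕ)
    (u : Fin n →₀ ℕ) : Prop :=
  (∑ i, u i) = D ∧ (monomial u (1 : k)) ∉ I ∧
    ∀ v : Fin n →₀ ℕ, (∑ i, v i) = D → (monomial v (1 : k)) ∉ I → toLex v ≤ toLex u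

/-- Hilbert–Samuel (cumulative Hilbert) function of `S/I`. -/
noncomputable def cumHF {n : ℕ} (I : Ideal (MvPolynomial (Fin n) k)) (m : ℕ) : ℤ :=
  ∑ j ∈ Finset.range (m + 1), (HF I j : ℤ)

/-- Forward difference operator. -/
def diffOp (f : ℕ → ℤ) : ℕ → ℤ := fun m => f (m + 1) - f m

/-- The multiplicity `e(S/I)`, where `t = dim S/I`: the eventual (constant) value of the
`t`-th finite difference of the Hilbert–Samuel function of `S/I`. -/
noncomputable def mult {n : ℕ} (I : Ideal (MvPolynomial (Fin n) k)) (t : ℕ) : ℤ :=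
  Filter.limsup (diffOp^[t] (cumHF I)) Filter.atTop

/-- The height of an ideal: the infimum of heights of primes containing it. -/
noncomputable def idealHeight {n : ℕ} (I : Ideal (MvPolynomial (Fin n) k)) : ℕ∞ :=
  ⨅ (P : PrimeSpectrum (MvPolynomial (Fin n) k)) (_ : I ≤ P.asIdeal), Order.height P

/-- A homogeneous ideal. -/
def IsHomogeneousIdeal {n : ℕ} (I : Ideal (MvPolynomial (Fin n) k)) : Prop :=
  ∀ f ∈ I, ∀ m : ℕ, homogeneousComponent m f ∈ I

/-- Hilbert function of the graded submodule `a/f` of `S/f` in degree `m`. -/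
noncomputable def HFsub {n : ℕ} (f a : Ideal (MvPolynomial (Fin n) k)) (m : ℕ) : ℕ :=
  Module.finrank k
    ((Submodule.map (Ideal.Quotient.mkₐ k f).toLinearMap (homogeneousSubmodule (Fin n) k m)) ⊓
      (Submodule.map (Ideal.Quotient.mkₐ k f).toLinearMap (Submodule.restrictScalars k a)) :
      Submodule k (MvPolynomial (Fin n) k ⧸ f))


private lemma aux_quot_equiv {k : Type} [Field k] (J : Ideal (MvPolynomial (Fin 3) k))
    (T : Set (Fin 3 →₀ ℕ))
    (h : ∀ p : MvPolynomial (Fin 3) k, p ∈ J ↔ ∀ xi ∈ p.support, xi ∈ T) :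
    Module.finrank k (MvPolynomial (Fin 3) k ⧸ J) = Module.finrank k (↥Tᶜ →₀ k) := by
  have hT : J.restrictScalars k
      = (AddMonoidAlgebra.supported k k T : Submodule k (MvPolynomial (Fin 3) k)) := by
    ext p
    rw [Submodule.restrictScalars_mem, h p, AddMonoidAlgebra.mem_supported]
    exact ⟨fun h' x hx => h' x hx, fun h' x hx => h' hx⟩
  have e1 : (MvPolynomial (Fin 3) k ⧸ J.restrictScalars k) ≃ₗ[k] (MvPolynomial (Fin 3) k ⧸ J) :=
    Submodule.Quotient.restrictScalarsEquiv k J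
  have compl : IsCompl (AddMonoidAlgebra.supported k k T : Submodule k (MvPolynomial (Fin 3) k))
      (AddMonoidAlgebra.supported k k Tᶜ : Submodule k (MvPolynomial (Fin 3) k)) := by
    have h0 : IsCompl (Finsupp.supported k k T : Submodule k ((Fin 3 →₀ ℕ) →₀ k))
        (Finsupp.supported k k Tᶜ) := by
      constructor
      · exact Finsupp.disjoint_supported_supported disjoint_compl_right
      · rw [codisjoint_iff, ← Finsupp.supported_union, Set.union_compl_self, Finsupp.supported_univ]
    rw [AddMonoidAlgebra.supported_eq_map, AddMonoidAlgebra.supported_eq_map]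
    exact (Submodule.orderIsoMapComap (AddMonoidAlgebra.coeffLinearEquiv k).symm).isCompl h0
  have e2 : (MvPolynomial (Fin 3) k ⧸ J.restrictScalars k) ≃ₗ[k]
      (AddMonoidAlgebra.supported k k Tᶜ : Submodule k (MvPolynomial (Fin 3) k)) := by
    rw [hT]
    exact Submodule.quotientEquivOfIsCompl _ _ compl
  have e3 : (AddMonoidAlgebra.supported k k Tᶜ : Submodule k (MvPolynomial (Fin 3) k)) ≃ₗ[k] (↥Tᶜ →₀ k) :=
    AddMonoidAlgebra.supportedEquivFinsupp Tᶜ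
  exact ((e1.symm.trans e2).trans e3).finrank_eq

private lemma aux_count {k : Type} [Field k] (d : Fin 3 → ℕ) (hd1 : ∀ i, 1 ≤ d i)
    (u : Fin 3 →₀ ℕ) (hub : ∀ i, u i < d i) :
    Module.finrank k (↥({v : Fin 3 →₀ ℕ | (∃ i, d i ≤ v i) ∨ u ≤ v}ᶜ) →₀ k)
      = d 0 * d 1 * d 2 - (d 0 - u 0) * (d 1 - u 1) * (d 2 - u 2) := by
  classical
  set d' : Fin 3 →₀ ℕ := Finsupp.equivFunOnFinite.symm (fun i => d i - 1) with hd'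
  have hd'app : ∀ i, d' i = d i - 1 := fun i => rfl
  have hset : {v : Fin 3 →₀ ℕ | (∃ i, d i ≤ v i) ∨ u ≤ v}ᶜ
      = ↑(Finset.Iic d' \ Finset.Icc u d') := by
    ext v
    simp only [Set.mem_compl_iff, Set.mem_setOf_eq, Finset.coe_sdiff, Set.mem_diff,
      Finset.mem_coe, Finset.mem_Iic, Finset.mem_Icc, not_or, not_exists, not_le,
      Finsupp.le_def, hd'app]
    constructor
    · rintro ⟨h1, h2⟩
      refine ⟨fun i => by have := h1 i; have := hd1 i; omega, fun h => h2 fun i => (h.1 i)⟩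
    · rintro ⟨h1, h2⟩
      refine ⟨fun i => by have := h1 i; have := hd1 i; omega, fun h => h2 ⟨fun i => h i, h1⟩⟩
  rw [hset]
  rw [Module.finrank_finsupp_self]
  simp only [Finset.coe_sort_coe, Fintype.card_coe]
  rw [Finset.card_sdiff_of_subset Finset.Icc_subset_Iic_self]
  have h1 : (Finset.Iic d').card = d 0 * d 1 * d 2 := by
    rw [Finsupp.card_Iic]
    rw [Finset.prod_subset (Finset.subset_univ d'.support)
      (by intro x _ hx; rw [Finsupp.notMem_support_iff] at hx; simp [hx])]
    simp only [Nat.card_Iic, hd'app]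
    rw [Fin.prod_univ_three, Nat.sub_add_cancel (hd1 0), Nat.sub_add_cancel (hd1 1),
      Nat.sub_add_cancel (hd1 2)]
  have h2 : (Finset.Icc u d').card = (d 0 - u 0) * (d 1 - u 1) * (d 2 - u 2) := by
    rw [Finsupp.card_Icc]
    rw [Finset.prod_subset (Finset.subset_univ _)
      (by intro x _ hx
          simp only [Finset.mem_union, Finsupp.mem_support_iff, not_or, not_not] at hx
          simp [hx.1, hx.2])]
    simp only [Nat.card_Icc, hd'app]
    rw [Fin.prod_univ_three,
      show d 0 - 1 + 1 - u 0 = d 0 - u 0 by have := hd1 0; omega,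
      show d 1 - 1 + 1 - u 1 = d 1 - u 1 by have := hd1 1; omega,
      show d 2 - 1 + 1 - u 2 = d 2 - u 2 by have := hd1 2; omega]
  rw [h1, h2]

private lemma aux_lex {k : Type} [Field k] (d : Fin 3 → ℕ) (hd1 : ∀ i, 1 ≤ d i)
    (D : ℕ) (hD3 : D ≤ (d 0 - 1) + (d 1 - 1) + (d 2 - 1))
    (u : Fin 3 →₀ ℕ)
    (hmem : ∀ v : Fin 3 →₀ ℕ, (monomial v (1:k)) ∈ pows (k := k) le_rfl d ↔ ∃ i, d i ≤ v i)
    (hunot : (monomial u (1:k)) ∉ pows (k := k) le_rfl d)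
    (husum : (∑ i, u i) = D)
    (humax : ∀ v : Fin 3 →₀ ℕ, (∑ i, v i) = D →
      (monomial v (1:k)) ∉ pows (k := k) le_rfl d → toLex v ≤ toLex u) :
    u 0 = min (d 0 - 1) D ∧ u 1 = min (d 1 - 1) (D - min (d 0 - 1) D) ∧
      u 2 = D - min (d 0 - 1) D - min (d 1 - 1) (D - min (d 0 - 1) D) := by
  have hub : ∀ i, u i < d i := by
    intro i
    by_contra hcon
    exact hunot ((hmem u).mpr ⟨i, le_of_not_gt hcon⟩)
  have husum3 : u 0 + u 1 + u 2 = D := by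
    rw [← husum, Fin.sum_univ_three]
  set w0 : ℕ := min (d 0 - 1) D with hw0
  set w1 : ℕ := min (d 1 - 1) (D - w0) with hw1
  set w2 : ℕ := D - w0 - w1 with hw2
  set w : Fin 3 →₀ ℕ := Finsupp.equivFunOnFinite.symm ![w0, w1, w2] with hwdef
  have hwa0 : w 0 = w0 := rfl
  have hwa1 : w 1 = w1 := rfl
  have hwa2 : w 2 = w2 := rfl
  have hwsum : (∑ i, w i) = D := by
    rw [Fin.sum_univ_three, hwa0, hwa1, hwa2]; omega
  have hwnot : (monomial w (1:k)) ∉ pows (k := k) le_rfl d := by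
    rw [hmem]
    rintro ⟨i, hi⟩
    have hb10 := hd1 0; have hb11 := hd1 1; have hb12 := hd1 2
    fin_cases i
    · exact absurd (show d 0 ≤ w 0 from hi) (by rw [hwa0]; omega)
    · exact absurd (show d 1 ≤ w 1 from hi) (by rw [hwa1]; omega)
    · exact absurd (show d 2 ≤ w 2 from hi) (by rw [hwa2]; omega)
  have hle1 : toLex w ≤ toLex u := humax w hwsum hwnot
  have hle2 : toLex u ≤ toLex w := by
    by_contra hcon
    obtain ⟨j, hj1, hj2⟩ := Finsupp.lex_def.mp (lt_of_not_ge hcon)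
    fin_cases j
    · have h2 : w 0 < u 0 := hj2
      rw [hwa0] at h2
      have := hub 0; omega
    · have h0 : w 0 = u 0 := hj1 0 (by decide)
      have h2 : w 1 < u 1 := hj2
      rw [hwa0] at h0; rw [hwa1] at h2
      have := hub 1; omega
    · have h0 : w 0 = u 0 := hj1 0 (by decide)
      have h1 : w 1 = u 1 := hj1 1 (by decide)
      have h2 : w 2 < u 2 := hj2
      rw [hwa0] at h0; rw [hwa1] at h1; rw [hwa2] at h2
      omega
  have huw : u = w := toLex.injective (le_antisymm hle2 hle1)
  refine ⟨?_, ?_, ?_⟩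
  · rw [huw, hwa0]
  · rw [huw, hwa1]
  · rw [huw, hwa2]

theorem stmt2 {k : Type} [Field k] (d : Fin 3 → ℕ) (hd1 : ∀ i, 1 ≤ d i)
    (hmono : Monotone d) (D : ℕ) (hD1 : 1 ≤ D) (hD : D ≤ ∑ i, (d i - 1))
    (a : Fin 3)
    (ha1 : ∑ i ∈ Finset.Iio a, (d i - 1) < D)
    (ha2 : D ≤ ∑ i ∈ Finset.Iic a, (d i - 1))
    (c : Fin 3 → ℕ)
    (hc : ∀ i, c i = if i < a then 1
      else if i = a then d a - (D - ∑ j ∈ Finset.Iio a, (d j - 1)) else d i)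
    (u : Fin 3 →₀ ℕ)
    (hu : IsLexLargestNonmember (pows (k := k) le_rfl d) D u) :
    Module.finrank k
      (MvPolynomial (Fin 3) k ⧸ (pows (k := k) le_rfl d ⊔ Ideal.span {monomial u (1 : k)})) =
      d 0 * d 1 * d 2 - c 0 * c 1 * c 2 := by
  classical
  obtain ⟨husum, hunot, humax⟩ := hu
  have hpows : pows (k := k) le_rfl d
      = Ideal.span ((fun s => monomial s (1:k)) ''
        (Set.range fun i : Fin 3 => Finsupp.single i (d i))) := by
    unfold pows
    rw [show (Set.range fun i : Fin 3 => (X (Fin.castLE le_rfl i) : MvPolynomial (Fin 3) k) ^ d i)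
        = Set.range ((fun s => monomial s (1:k)) ∘ fun i : Fin 3 => Finsupp.single i (d i)) from ?_,
      Set.range_comp]
    apply congrArg
    funext i
    simp [Function.comp, X_pow_eq_monomial]
  have hmem : ∀ v : Fin 3 →₀ ℕ,
      (monomial v (1:k)) ∈ pows (k := k) le_rfl d ↔ ∃ i, d i ≤ v i := by
    intro v
    rw [hpows, mem_ideal_span_monomial_image]
    simp [support_monomial, Finsupp.single_le_iff]
  have hub : ∀ i, u i < d i := by
    intro i
    by_contra hcon
    exact hunot ((hmem u).mpr ⟨i, le_of_not_gt hcon⟩)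
  have hD3 : D ≤ (d 0 - 1) + (d 1 - 1) + (d 2 - 1) := by
    rw [Fin.sum_univ_three] at hD; omega
  obtain ⟨hu0, hu1, hu2⟩ := aux_lex d hd1 D hD3 u hmem hunot husum humax
  have hJmem : ∀ p : MvPolynomial (Fin 3) k,
      p ∈ pows (k := k) le_rfl d ⊔ Ideal.span {monomial u (1:k)} ↔
        ∀ xi ∈ p.support, xi ∈ {v : Fin 3 →₀ ℕ | (∃ i, d i ≤ v i) ∨ u ≤ v} := by
    intro p
    rw [show pows (k := k) le_rfl d ⊔ Ideal.span {monomial u (1:k)}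
        = Ideal.span ((fun s => monomial s (1:k)) ''
          ((Set.range fun i : Fin 3 => Finsupp.single i (d i)) ∪ {u})) from by
        rw [Set.image_union, Ideal.span_union, hpows, Set.image_singleton],
      mem_ideal_span_monomial_image]
    refine forall₂_congr fun xi _ => ?_
    simp [Finsupp.single_le_iff, or_comm]
  rw [aux_quot_equiv _ _ hJmem, aux_count d hd1 u hub]
  -- final arithmetic with c
  have hd10 := hd1 0; have hd11 := hd1 1; have hd12 := hd1 2
  have ha : a = 0 ∨ a = 1 ∨ a = 2 := by fin_cases a <;> decide
  rcases ha with rfl | rfl | rfl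
  · have hS : ∑ j ∈ Finset.Iio (0 : Fin 3), (d j - 1) = 0 := by
      rw [show Finset.Iio (0 : Fin 3) = ∅ from by decide, Finset.sum_empty]
    have hSc : ∑ j ∈ Finset.Iic (0 : Fin 3), (d j - 1) = d 0 - 1 := by
      rw [show Finset.Iic (0 : Fin 3) = {0} from by decide, Finset.sum_singleton]
    rw [hS] at ha1
    rw [hSc] at ha2
    have hc0 : c 0 = d 0 - (D - 0) := by rw [hc 0, if_neg (by decide), if_pos rfl, hS]
    have hc1 : c 1 = d 1 := by rw [hc 1, if_neg (by decide), if_neg (by decide)]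
    have hc2 : c 2 = d 2 := by rw [hc 2, if_neg (by decide), if_neg (by decide)]
    rw [show d 0 - u 0 = c 0 by rw [hc0, hu0]; omega,
      show d 1 - u 1 = c 1 by rw [hc1, hu1]; omega,
      show d 2 - u 2 = c 2 by rw [hc2, hu2]; omega]
  · have hS : ∑ j ∈ Finset.Iio (1 : Fin 3), (d j - 1) = d 0 - 1 := by
      rw [show Finset.Iio (1 : Fin 3) = {0} from by decide, Finset.sum_singleton]
    have hSc : ∑ j ∈ Finset.Iic (1 : Fin 3), (d j - 1) = (d 0 - 1) + (d 1 - 1) := by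
      rw [show Finset.Iic (1 : Fin 3) = {0, 1} from by decide,
        Finset.sum_insert (by decide), Finset.sum_singleton]
    rw [hS] at ha1
    rw [hSc] at ha2
    have hc0 : c 0 = 1 := by rw [hc 0, if_pos (by decide)]
    have hc1 : c 1 = d 1 - (D - (d 0 - 1)) := by
      rw [hc 1, if_neg (by decide), if_pos rfl, hS]
    have hc2 : c 2 = d 2 := by rw [hc 2, if_neg (by decide), if_neg (by decide)]
    rw [show d 0 - u 0 = c 0 by rw [hc0, hu0]; omega,
      show d 1 - u 1 = c 1 by rw [hc1, hu1]; omega,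
      show d 2 - u 2 = c 2 by rw [hc2, hu2]; omega]
  · have hS : ∑ j ∈ Finset.Iio (2 : Fin 3), (d j - 1) = (d 0 - 1) + (d 1 - 1) := by
      rw [show Finset.Iio (2 : Fin 3) = {0, 1} from by decide,
        Finset.sum_insert (by decide), Finset.sum_singleton]
    have hSc : ∑ j ∈ Finset.Iic (2 : Fin 3), (d j - 1) = (d 0 - 1) + (d 1 - 1) + (d 2 - 1) := by
      rw [show Finset.Iic (2 : Fin 3) = {0, 1, 2} from by decide,
        Finset.sum_insert (by decide), Finset.sum_insert (by decide), Finset.sum_singleton]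
      ring
    rw [hS] at ha1
    rw [hSc] at ha2
    have hc0 : c 0 = 1 := by rw [hc 0, if_pos (by decide)]
    have hc1 : c 1 = 1 := by rw [hc 1, if_pos (by decide)]
    have hc2 : c 2 = d 2 - (D - ((d 0 - 1) + (d 1 - 1))) := by
      rw [hc 2, if_neg (by decide), if_pos rfl, hS]
    rw [show d 0 - u 0 = c 0 by rw [hc0, hu0]; omega,
      show d 1 - u 1 = c 1 by rw [hc1, hu1]; omega,
      show d 2 - u 2 = c 2 by rw [hc2, hu2]; omega]
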